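/- Let (eₙ) be a basis of a Banach space such that there is a function M : ℝ⁺ → ℝ⁺ with ‖Σ aₙeₙ‖ ≤ M(ε)‖Σ aₙsₙ‖ + ε Σ|aₙ| for all finitely supported (aₙ) ⊆ ℝ and all ε > 0, where (sₙ) is the summing basis of c₀, i.e. ‖Σ aₙsₙ‖ = sup_k |Σᵢ₌₁^k aᵢ|. Then lim_{n→∞} (1/n)‖Σᵢ₌₁ⁿ (−1)ⁱ eᵢ‖ = 0; in particular (eₙ) is not equivalent to the unit vector basis of ℓ¹. -/

import Mathlib

open Filter

private noncomputable def aa : ℕ → ℝ := fun i => if i = 0 then 0 else (-1 : ℝ) ^ i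

private lemma aa_partial (k : ℕ) :
    ∑ i ∈ Finset.range (k + 1), aa i = (-1 + (-1 : ℝ) ^ k) / 2 := by
  induction k with
  | zero => simp [aa]
  | succ k ih =>
    rw [Finset.sum_range_succ, ih]
    simp only [aa, Nat.succ_ne_zero, if_false]
    rw [pow_succ]
    ring

private lemma aa_partial_le (k : ℕ) : |∑ i ∈ Finset.range k, aa i| ≤ 1 := by
  cases k with
  | zero => simp
  | succ k =>
    rw [aa_partial]
    rcases Nat.even_or_odd k with hk | hk
    · rw [hk.neg_one_pow]; norm_num
    · rw [hk.neg_one_pow]; norm_num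

private lemma aa_abs_sum (n : ℕ) : ∑ i ∈ Finset.range (n + 1), |aa i| = n := by
  induction n with
  | zero => simp [aa]
  | succ n ih =>
    rw [Finset.sum_range_succ, ih]
    simp [aa, abs_pow]

private lemma aa_sum_eq {X : Type*} [NormedAddCommGroup X] [NormedSpace ℝ X]
    (e : ℕ → X) (n : ℕ) :
    ∑ i ∈ Finset.Icc 1 n, ((-1 : ℝ)) ^ i • e i
      = ∑ i ∈ Finset.range (n + 1), aa i • e i := by
  rw [show (∑ i ∈ Finset.Icc 1 n, ((-1 : ℝ)) ^ i • e i)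
      = ∑ i ∈ Finset.Icc 1 n, aa i • e i from
    Finset.sum_congr rfl (by
      intro i hi
      simp only [Finset.mem_Icc] at hi
      have : i ≠ 0 := by omega
      simp [aa, this])]
  refine Finset.sum_subset ?_ ?_
  · intro i hi
    simp only [Finset.mem_Icc] at hi
    simp [Finset.mem_range]
    omega
  · intro i hi hni
    simp only [Finset.mem_range, Finset.mem_Icc] at hi hni
    have : i = 0 := by omega
    simp [this, aa]

theorem stmt12 {X : Type*} [NormedAddCommGroup X] [NormedSpace ℝ X] [CompleteSpace X]
    (e : ℕ → X) (M : ℝ → ℝ) (hM : ∀ ε > (0 : ℝ), 0 < M ε)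
    (h : ∀ ε > (0 : ℝ), ∀ (n : ℕ) (a : ℕ → ℝ) (S : ℝ),
      (∀ k ≤ n, |∑ i ∈ Finset.range k, a i| ≤ S) →
      ‖∑ i ∈ Finset.range n, a i • e i‖ ≤ M ε * S + ε * ∑ i ∈ Finset.range n, |a i|) :
    Tendsto (fun n : ℕ => (1 / (n : ℝ)) * ‖∑ i ∈ Finset.Icc 1 n, ((-1 : ℝ)) ^ i • e i‖)
      atTop (nhds 0) ∧
    ¬ ∃ c > (0 : ℝ), ∀ (n : ℕ) (a : ℕ → ℝ),
      c * ∑ i ∈ Finset.range n, |a i| ≤ ‖∑ i ∈ Finset.range n, a i • e i‖ := by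
  have key : ∀ ε > (0 : ℝ), ∀ n : ℕ,
      ‖∑ i ∈ Finset.range (n + 1), aa i • e i‖ ≤ M ε + ε * n := by
    intro ε hε n
    have := h ε hε (n + 1) aa 1 (fun k _ => aa_partial_le k)
    rw [aa_abs_sum] at this
    linarith
  constructor
  · rw [Metric.tendsto_atTop]
    intro ε hε
    have hε2 : (0 : ℝ) < ε / 2 := by linarith
    set m := M (ε / 2) with hm
    have hmpos : 0 < m := hM _ hε2
    obtain ⟨N, hN⟩ := exists_nat_gt (2 * m / ε)
    refine ⟨max N 1, fun n hn => ?_⟩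
    have hn1 : 1 ≤ n := le_trans (le_max_right N 1) hn
    have hnN : (N : ℝ) ≤ n := by exact_mod_cast le_trans (le_max_left N 1) hn
    have hnpos : (0 : ℝ) < n := by exact_mod_cast hn1
    rw [Real.dist_eq, sub_zero,
      abs_of_nonneg (mul_nonneg (by positivity) (norm_nonneg _))]
    rw [aa_sum_eq]
    have h1 := key (ε / 2) hε2 n
    have h2 : 2 * m < (N : ℝ) * ε := (div_lt_iff₀ hε).mp hN
    calc (1 / (n : ℝ)) * ‖∑ i ∈ Finset.range (n + 1), aa i • e i‖
        ≤ (1 / (n : ℝ)) * (m + (ε / 2) * n) := by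
          have hpos : (0:ℝ) ≤ 1 / (n : ℝ) := by positivity
          exact mul_le_mul_of_nonneg_left h1 hpos
      _ = m / (n : ℝ) + ε / 2 := by field_simp
      _ < ε / 2 + ε / 2 := by
          have : m / (n : ℝ) < ε / 2 := by
            rw [div_lt_iff₀ hnpos]
            nlinarith
          linarith
      _ = ε := by ring
  · rintro ⟨c, hc, hle⟩
    have hc2 : (0 : ℝ) < c / 2 := by linarith
    obtain ⟨n, hn⟩ := exists_nat_gt (2 * M (c / 2) / c)
    have h1 := hle (n + 1) aa
    rw [aa_abs_sum] at h1
    have h2 := key (c / 2) hc2 n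
    have hMpos := hM (c / 2) hc2
    have hn' : 2 * M (c / 2) / c < (n : ℝ) := hn
    nlinarith [div_lt_iff₀ hc |>.mp hn']
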